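/- arXiv:2112.11901 — 2 statements merged into one kernel-verified Lean document; each statement's English description precedes it below -/
import Mathlib

section
/- Failure of the triangle inequality for the bottleneck dissimilarity (Example 4.2). For each integer k ≥ 1, let C_k be the 2-dimensional signed barcode ({(m/k, 1−m/k) : 0 ≤ m ≤ k}, {((m+1)/k, 1−m/k) : 0 ≤ m ≤ k−1}) (both components taken as multisets), and let B = ({(0,1)}, ∅) and D = ({(1,0)}, ∅). Then d̂_B(B, C_k) ≤ 1/k and d̂_B(C_k, D) ≤ 1/k, while d̂_B(B, D) = 1. Consequently, the bottleneck dissimilarity d̂_B on finite 2-dimensional signed barcodes does not satisfy the triangle inequality. -/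
set_option linter.unusedVariables false
set_option maxHeartbeats 800000

open scoped Classical ENNReal

noncomputable section

/-- Points of `R^n`. The metric on `Fin n → ℝ` is the sup-metric, so `dist` is `‖·‖_∞`. -/
abbrev Pt (n : ℕ) := Fin n → ℝ

/-- An `n`-parameter persistence module: a functor from the poset `R^n`
to finite-dimensional `k`-vector spaces. -/
structure PersMod (k : Type) [Field k] (n : ℕ) where
  X : Pt n → Type
  [acg : ∀ r, AddCommGroup (X r)]
  [mod : ∀ r, Module k (X r)]
  [fd : ∀ r, FiniteDimensional k (X r)]
  map : ∀ {r s : Pt n}, r ≤ s → (X r →ₗ[k] X s)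
  map_id : ∀ r : Pt n, map (le_refl r) = LinearMap.id
  map_comp : ∀ {r s t : Pt n} (h₁ : r ≤ s) (h₂ : s ≤ t),
    (map h₂).comp (map h₁) = map (h₁.trans h₂)

attribute [instance] PersMod.acg PersMod.mod PersMod.fd

variable {k : Type} [Field k] {n : ℕ}

/-- A morphism of persistence modules: a natural transformation. -/
structure PersHom (M N : PersMod k n) where
  app : ∀ r, M.X r →ₗ[k] N.X r
  natural : ∀ {r s : Pt n} (h : r ≤ s),
    (N.map h).comp (app r) = (app s).comp (M.map h)

def shiftPt (ε : ℝ) (r : Pt n) : Pt n := fun i => r i + ε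

lemma shiftPt_mono {ε : ℝ} {r s : Pt n} (h : r ≤ s) : shiftPt ε r ≤ shiftPt ε s :=
  fun i => by show r i + ε ≤ s i + ε; linarith [h i]

lemma le_shiftPt {ε : ℝ} (hε : 0 ≤ ε) (r : Pt n) : r ≤ shiftPt ε r :=
  fun i => le_add_of_nonneg_right hε

/-- The `ε`-shift of a persistence module. -/
def PersMod.shift (M : PersMod k n) (ε : ℝ) : PersMod k n where
  X r := M.X (shiftPt ε r)
  map h := M.map (shiftPt_mono h)
  map_id r := M.map_id _
  map_comp h₁ h₂ := M.map_comp _ _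

/-- `M` and `N` are `ε`-interleaved. -/
def Interleaved (ε : ℝ) (M N : PersMod k n) : Prop :=
  ∃ hε : 0 ≤ ε,
  ∃ (f : PersHom M (N.shift ε)) (g : PersHom N (M.shift ε)),
    (∀ r : Pt n, (g.app (shiftPt ε r)).comp (f.app r)
        = M.map ((le_shiftPt hε r).trans (le_shiftPt hε _))) ∧
    (∀ r : Pt n, (f.app (shiftPt ε r)).comp (g.app r)
        = N.map ((le_shiftPt hε r).trans (le_shiftPt hε _)))

/-- The interleaving distance. -/
def interleavingDist (M N : PersMod k n) : ℝ≥0∞ :=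
  sInf { e : ℝ≥0∞ | ∃ ε : ℝ, e = ENNReal.ofReal ε ∧ Interleaved ε M N }

/-- The free persistence module `⊕_i F_{L i}`, where `F_j` is the "upset" interval module
generated at `j`. -/
def freeModFin {m : ℕ} (L : Fin m → Pt n) : PersMod k n where
  X r := {i : Fin m // L i ≤ r} → k
  map {r s} h :=
    { toFun := fun f i => if h' : L i.1 ≤ r then f ⟨i.1, h'⟩ else 0
      map_add' := by
        intro f g; funext i
        by_cases h' : L i.1 ≤ r <;> simp [h']
      map_smul' := by
        intro c f; funext i
        by_cases h' : L i.1 ≤ r <;> simp [h'] }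
  map_id r := by
    apply LinearMap.ext; intro f; funext i
    show (if h' : L i.1 ≤ r then f ⟨i.1, h'⟩ else 0) = f i
    rw [dif_pos i.2]
  map_comp {r s t} h₁ h₂ := by
    apply LinearMap.ext; intro f; funext i
    show (if hs : L i.1 ≤ s then
            (if hr : L i.1 ≤ r then f ⟨i.1, hr⟩ else 0) else 0)
        = (if hr : L i.1 ≤ r then f ⟨i.1, hr⟩ else 0)
    by_cases hr : L i.1 ≤ r
    · simp [hr, hr.trans h₁]
    · simp [hr]

/-- Isomorphism of persistence modules. -/
def PersIso (M N : PersMod k n) : Prop :=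
  ∃ (f : PersHom M N) (g : PersHom N M),
    (∀ r, (g.app r).comp (f.app r) = LinearMap.id) ∧
    (∀ r, (f.app r).comp (g.app r) = LinearMap.id)

/-- `P` is free of finite rank with barcode `B`. -/
def IsFreeWith (P : PersMod k n) (B : Multiset (Pt n)) : Prop :=
  ∃ (m : ℕ) (L : Fin m → Pt n), B = (List.ofFn L : Multiset (Pt n)) ∧ PersIso P (freeModFin L)

/-- `M` is finitely presentable: it is (isomorphic to) the cokernel of a morphism
between free modules of finite rank. -/
def FinitelyPresentable (M : PersMod k n) : Prop :=
  ∃ (c r : ℕ) (Lc : Fin c → Pt n) (Lr : Fin r → Pt n)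
    (f : PersHom (freeModFin Lc) (freeModFin Lr)) (g : PersHom (freeModFin Lr) M),
    (∀ x, Function.Surjective (g.app x)) ∧
    (∀ x, LinearMap.range (f.app x) = LinearMap.ker (g.app x))

/-- A resolution of `M` of length `len`:
an exact sequence `0 → P_len → ⋯ → P_0 → M → 0` (encoded with `P j = 0` for `j > len`). -/
structure Res (M : PersMod k n) where
  len : ℕ
  P : ℕ → PersMod k n
  d : ∀ j : ℕ, PersHom (P (j + 1)) (P j)
  aug : PersHom (P 0) M
  aug_surj : ∀ r, Function.Surjective (aug.app r)
  exact_zero : ∀ r, LinearMap.range ((d 0).app r) = LinearMap.ker (aug.app r)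
  exact_succ : ∀ (j : ℕ) (r), LinearMap.range ((d (j + 1)).app r) = LinearMap.ker ((d j).app r)
  vanish : ∀ j, len < j → ∀ r, ∀ x : (P j).X r, x = 0

/-- Projectivity in the category of persistence modules
(where epimorphisms are the pointwise surjections). -/
def IsProjectiveMod (P : PersMod k n) : Prop :=
  ∀ (A B : PersMod k n) (e : PersHom A B), (∀ r, Function.Surjective (e.app r)) →
    ∀ f : PersHom P B, ∃ g : PersHom P A, ∀ r, (e.app r).comp (g.app r) = f.app r

/-- An `ε`-bijection between two multisets of points of `R^n`. -/
def IsMatching (ε : ℝ) (B C : Multiset (Pt n)) : Prop :=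
  ∃ m : Multiset (Pt n × Pt n),
    m.map Prod.fst = B ∧ m.map Prod.snd = C ∧ ∀ p ∈ m, dist p.1 p.2 ≤ ε

/-- The bottleneck distance between barcodes. -/
def bottleneckDist (B C : Multiset (Pt n)) : ℝ≥0∞ :=
  sInf { e : ℝ≥0∞ | ∃ ε : ℝ, 0 ≤ ε ∧ e = ENNReal.ofReal ε ∧ IsMatching ε B C }

/-- A signed barcode: a pair (positive part, negative part) of barcodes. -/
abbrev SignedBarcode (n : ℕ) := Multiset (Pt n) × Multiset (Pt n)

/-- The bottleneck dissimilarity on signed barcodes. -/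
def dBhat (B C : SignedBarcode n) : ℝ≥0∞ :=
  bottleneckDist (B.1 + C.2) (C.1 + B.2)

/-- Binary direct sum of persistence modules. -/
def PersMod.dsum (M N : PersMod k n) : PersMod k n where
  X r := M.X r × N.X r
  map h := (M.map h).prodMap (N.map h)
  map_id r := by
    apply LinearMap.ext; intro x
    show (M.map (le_refl r) x.1, N.map (le_refl r) x.2) = x
    rw [M.map_id, N.map_id]; rfl
  map_comp {r s t} h₁ h₂ := by
    apply LinearMap.ext; intro x
    show (M.map h₂ (M.map h₁ x.1), N.map h₂ (N.map h₁ x.2))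
        = (M.map (h₁.trans h₂) x.1, N.map (h₁.trans h₂) x.2)
    rw [← M.map_comp h₁ h₂, ← N.map_comp h₁ h₂]; rfl

/-- Finite direct sum of persistence modules. -/
def dsumFin {m : ℕ} (P : Fin m → PersMod k n) : PersMod k n where
  X r := ∀ j, (P j).X r
  map h := LinearMap.pi fun j => ((P j).map h).comp (LinearMap.proj j)
  map_id r := by
    apply LinearMap.ext; intro x; funext j
    show (P j).map (le_refl r) (x j) = x j
    rw [(P j).map_id]; rfl
  map_comp {r s t} h₁ h₂ := by
    apply LinearMap.ext; intro x; funext j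
    show (P j).map h₂ ((P j).map h₁ (x j)) = (P j).map (h₁.trans h₂) (x j)
    rw [← (P j).map_comp h₁ h₂]; rfl

/-- The zero persistence module. -/
def zeroMod : PersMod k n := freeModFin (fun i : Fin 0 => i.elim0)

/-- The Hilbert function of a persistence module. -/
def Hil (M : PersMod k n) (r : Pt n) : ℕ := Module.finrank k (M.X r)

/-- Number of points of `B` (with multiplicity) that are `≤ r`. -/
def countLe (B : Multiset (Pt n)) (r : Pt n) : ℕ := Multiset.card (B.filter (fun i => i ≤ r))

/-- `R` is a free resolution of `M` with barcodes `B j`. -/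
def IsFreeRes {M : PersMod k n} (R : Res M) (B : ℕ → Multiset (Pt n)) : Prop :=
  ∀ j, IsFreeWith (R.P j) (B j)

/-- `R` is a minimal free resolution of `M` with barcodes `B j`: in every homological degree
its term has minimal rank among all free resolutions of `M`. -/
def IsMinFreeRes {M : PersMod k n} (R : Res M) (B : ℕ → Multiset (Pt n)) : Prop :=
  IsFreeRes R B ∧
  ∀ (R' : Res M) (B' : ℕ → Multiset (Pt n)), IsFreeRes R' B' →
    ∀ j, Multiset.card (B j) ≤ Multiset.card (B' j)

/-- Multiset union of the `B j` over even `j ≤ ℓ`. -/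
def evenPart (B : ℕ → Multiset (Pt n)) (ℓ : ℕ) : Multiset (Pt n) :=
  ∑ j ∈ Finset.range (ℓ + 1), if Even j then B j else 0

/-- Multiset union of the `B j` over odd `j ≤ ℓ`. -/
def oddPart (B : ℕ → Multiset (Pt n)) (ℓ : ℕ) : Multiset (Pt n) :=
  ∑ j ∈ Finset.range (ℓ + 1), if ¬ Even j then B j else 0

/-- `S` is the Betti signed barcode of `M`: the pair (even Betti numbers, odd Betti numbers)
coming from a minimal free resolution of `M`. -/
def IsBettiOf (M : PersMod k n) (S : SignedBarcode n) : Prop :=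
  ∃ (R : Res M) (B : ℕ → Multiset (Pt n)), IsMinFreeRes R B ∧
    S = (evenPart B R.len, oddPart B R.len)

/-- `(P, Q)` (with barcodes `BP`, `BQ`) is a minimal Hilbert decomposition of `η`. -/
def IsMinHilbDecomp (η : Pt n → ℤ) (P Q : PersMod k n) (BP BQ : Multiset (Pt n)) : Prop :=
  IsFreeWith P BP ∧ IsFreeWith Q BQ ∧
  (∀ r, η r = (Hil P r : ℤ) - (Hil Q r : ℤ)) ∧
  ∀ x : Pt n, ¬ (x ∈ BP ∧ x ∈ BQ)

/-- The `ℓ¹`-distance on `R^n`. -/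
def l1dist (x y : Pt n) : ℝ := ∑ i, |x i - y i|

/-- The 1-Wasserstein cost of a matching (encoded as a multiset of pairs). -/
def matchCost (m : Multiset (Pt n × Pt n)) : ℝ := (m.map fun p => l1dist p.1 p.2).sum

/-- The 1-Wasserstein distance between barcodes. -/
def wassDist (B C : Multiset (Pt n)) : ℝ≥0∞ :=
  sInf { e : ℝ≥0∞ | ∃ m : Multiset (Pt n × Pt n),
    m.map Prod.fst = B ∧ m.map Prod.snd = C ∧ e = ENNReal.ofReal (matchCost m) }

/-- The signed 1-Wasserstein distance on signed barcodes. -/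
def dW1hat (B C : SignedBarcode n) : ℝ≥0∞ := wassDist (B.1 + C.2) (C.1 + B.2)

/-- The reduction of a signed barcode: cancel common points with multiplicity. -/
def reduceSB (B : SignedBarcode n) : SignedBarcode n := (B.1 - B.2, B.2 - B.1)

/-- The signed barcode `B = ({(0,1)}, ∅)`. -/
def Bsb : SignedBarcode 2 := (({![(0 : ℝ), 1]} : Multiset (Pt 2)), 0)

/-- The signed barcode `D = ({(1,0)}, ∅)`. -/
def Dsb : SignedBarcode 2 := (({![(1 : ℝ), 0]} : Multiset (Pt 2)), 0)

/-- The signed barcode `C_k` of the staircase module `A_k` of Example 4.2. -/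
def Csb (kk : ℕ) : SignedBarcode 2 :=
  (((List.range (kk + 1)).map fun m => ![(m : ℝ) / kk, 1 - (m : ℝ) / kk] : List (Pt 2)),
   ((List.range kk).map fun m => ![((m : ℝ) + 1) / kk, 1 - (m : ℝ) / kk] : List (Pt 2)))

lemma bottleneck_le_of_matching {B C : Multiset (Pt n)} {ε : ℝ} (hε : 0 ≤ ε)
    (h : IsMatching ε B C) : bottleneckDist B C ≤ ENNReal.ofReal ε :=
  sInf_le ⟨ε, hε, rfl, h⟩

lemma dist_pair_le {a b c d ε : ℝ} (hε : 0 ≤ ε) (h1 : |a - c| ≤ ε) (h2 : |b - d| ≤ ε) :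
    dist (![a, b] : Pt 2) ![c, d] ≤ ε := by
  rw [dist_pi_le_iff hε]
  intro i
  fin_cases i <;>
    simp [Real.dist_eq, Matrix.cons_val_zero, Matrix.cons_val_one, Matrix.head_cons, h1, h2]

lemma dist_pair_lb (a b c d : ℝ) : |a - c| ≤ dist (![a, b] : Pt 2) ![c, d] := by
  have := dist_le_pi_dist (![a, b] : Pt 2) ![c, d] 0
  simpa [Real.dist_eq] using this

lemma list_cast_map {γ : Type*} (f : ℝ → γ) (l : List ℕ) :
    List.map f (l.flatMap fun a => [((a : ℕ) : ℝ)]) = List.map (fun a : ℕ => f a) l := by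
  induction l with
  | nil => rfl
  | cons a l ih => simp only [List.flatMap_cons, List.map_append, List.map_cons, List.map_nil,
      List.singleton_append, ih]

lemma Csb_fst (kk : ℕ) :
    (Csb kk).1 = (((List.range (kk+1)).map
      (fun m : ℕ => ![(m:ℝ)/kk, 1-(m:ℝ)/kk]) : List (Pt 2)) : Multiset (Pt 2)) := by
  show ((List.map (fun m : ℝ => (![m/kk, 1-m/kk] : Pt 2))
      ((List.range (kk+1)).flatMap fun a => [((a:ℕ):ℝ)]) : List (Pt 2)) : Multiset (Pt 2)) = _
  rw [list_cast_map]

lemma Csb_snd (kk : ℕ) :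
    (Csb kk).2 = (((List.range kk).map
      (fun m : ℕ => ![((m:ℝ)+1)/kk, 1-(m:ℝ)/kk]) : List (Pt 2)) : Multiset (Pt 2)) := by
  show ((List.map (fun m : ℝ => (![(m+1)/kk, 1-m/kk] : Pt 2))
      ((List.range kk).flatMap fun a => [((a:ℕ):ℝ)]) : List (Pt 2)) : Multiset (Pt 2)) = _
  rw [list_cast_map]

lemma dBhat_B_C (kk : ℕ) (hkk : 1 ≤ kk) :
    dBhat Bsb (Csb kk) ≤ ENNReal.ofReal (1 / (kk : ℝ)) := by
  have hk : (0 : ℝ) < kk := by exact_mod_cast hkk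
  have hε : (0 : ℝ) ≤ 1 / kk := by positivity
  apply bottleneck_le_of_matching hε
  refine ⟨↑((![(0:ℝ), 1], ![(0:ℝ)/kk, 1 - (0:ℝ)/kk]) ::
      (List.range kk).map (fun m : ℕ =>
        ((![((m:ℝ)+1)/kk, 1 - (m:ℝ)/kk] : Pt 2),
         (![((m:ℝ)+1)/kk, 1 - ((m:ℝ)+1)/kk] : Pt 2)))), ?_, ?_, ?_⟩
  · show _ = Bsb.1 + (Csb kk).2
    rw [Csb_snd]
    show _ = ({![(0:ℝ), 1]} : Multiset (Pt 2)) + _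
    rw [Multiset.singleton_add, Multiset.map_coe, List.map_cons, List.map_map,
      ← Multiset.cons_coe]
    rfl
  · show _ = (Csb kk).1 + Bsb.2
    rw [Csb_fst]
    show _ = _ + (0 : Multiset (Pt 2))
    rw [add_zero, Multiset.map_coe, List.map_cons, List.map_map, List.range_succ_eq_map,
      List.map_cons, List.map_map]
    congr 2
    · norm_num
    · apply List.map_congr_left
      intro m _
      show (![((m:ℝ)+1)/kk, 1 - ((m:ℝ)+1)/kk] : Pt 2)
          = ![((m.succ : ℕ):ℝ)/kk, 1 - ((m.succ : ℕ):ℝ)/kk]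
      push_cast
      rfl
  · intro p hp
    simp only [Multiset.mem_coe, List.mem_cons, List.mem_map, List.mem_range] at hp
    rcases hp with rfl | ⟨m, hm, rfl⟩
    · apply dist_pair_le hε <;> simp [hk.ne']
    · apply dist_pair_le hε
      · simp [hε]
      · have : (1 - (m:ℝ)/kk) - (1 - ((m:ℝ)+1)/kk) = 1/kk := by ring
        rw [this, abs_of_nonneg hε]

lemma dBhat_C_D (kk : ℕ) (hkk : 1 ≤ kk) :
    dBhat (Csb kk) Dsb ≤ ENNReal.ofReal (1 / (kk : ℝ)) := by
  have hk : (0 : ℝ) < kk := by exact_mod_cast hkk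
  have hε : (0 : ℝ) ≤ 1 / kk := by positivity
  apply bottleneck_le_of_matching hε
  refine ⟨↑((List.range kk).map (fun m : ℕ =>
      ((![(m:ℝ)/kk, 1 - (m:ℝ)/kk] : Pt 2),
       (![((m:ℝ)+1)/kk, 1 - (m:ℝ)/kk] : Pt 2))) ++
      [((![(kk:ℝ)/kk, 1 - (kk:ℝ)/kk] : Pt 2), (![(1:ℝ), 0] : Pt 2))]), ?_, ?_, ?_⟩
  · show _ = (Csb kk).1 + Dsb.2
    rw [Csb_fst]
    show _ = _ + (0 : Multiset (Pt 2))
    rw [add_zero, Multiset.map_coe, List.map_append, List.map_map, List.range_succ,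
      List.map_append]
    rfl
  · show _ = Dsb.1 + (Csb kk).2
    rw [Csb_snd]
    show _ = ({![(1:ℝ), 0]} : Multiset (Pt 2)) + _
    rw [Multiset.map_coe, List.map_append, List.map_map, ← Multiset.coe_add, add_comm,
      Multiset.singleton_add,
      show ((List.map Prod.snd [((![(kk:ℝ)/kk, 1 - (kk:ℝ)/kk] : Pt 2), (![(1:ℝ), 0] : Pt 2))] :
          List (Pt 2)) : Multiset (Pt 2)) = {(![(1:ℝ), 0] : Pt 2)} from rfl,
      Multiset.singleton_add]
    rfl
  · intro p hp
    simp only [Multiset.mem_coe, List.mem_append, List.mem_map, List.mem_range,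
      List.mem_singleton] at hp
    rcases hp with ⟨m, hm, rfl⟩ | rfl
    · apply dist_pair_le hε
      · have : (m:ℝ)/kk - ((m:ℝ)+1)/kk = -(1/kk) := by ring
        rw [this, abs_neg, abs_of_nonneg hε]
      · simp [hε]
    · have hkk1 : (kk:ℝ)/kk = 1 := div_self hk.ne'
      apply dist_pair_le hε <;> simp [hkk1, hε]


lemma dBhat_B_D : dBhat Bsb Dsb = 1 := by
  have hd : dist (![(0:ℝ), 1] : Pt 2) ![(1:ℝ), 0] = 1 := by
    apply le_antisymm
    · apply dist_pair_le zero_le_one <;> norm_num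
    · have := dist_pair_lb (0:ℝ) 1 1 0
      simpa using this
  apply le_antisymm
  · have : (1 : ℝ≥0∞) = ENNReal.ofReal 1 := by simp
    rw [this]
    apply bottleneck_le_of_matching zero_le_one
    refine ⟨{(![(0:ℝ), 1], ![(1:ℝ), 0])}, ?_, ?_, ?_⟩
    · simp [Bsb, Dsb, dBhat]
    · simp [Bsb, Dsb, dBhat]
    · intro p hp
      simp only [Multiset.mem_singleton] at hp
      subst hp
      exact hd.le
  · apply le_sInf
    rintro e ⟨ε, hε0, rfl, m, hfst, hsnd, hdist⟩
    have hBsb : Bsb.1 + Dsb.2 = ({![(0:ℝ), 1]} : Multiset (Pt 2)) := by simp [Bsb, Dsb]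
    have hDsb : Dsb.1 + Bsb.2 = ({![(1:ℝ), 0]} : Multiset (Pt 2)) := by simp [Bsb, Dsb]
    rw [hBsb] at hfst
    rw [hDsb] at hsnd
    have hcard : Multiset.card m = 1 := by
      have := congrArg Multiset.card hfst
      simpa using this
    obtain ⟨p, rfl⟩ := Multiset.card_eq_one.mp hcard
    simp only [Multiset.map_singleton, Multiset.singleton_inj] at hfst hsnd
    have hdp : dist p.1 p.2 ≤ ε := hdist p (Multiset.mem_singleton_self p)
    rw [hfst, hsnd, hd] at hdp
    rw [show (1 : ℝ≥0∞) = ENNReal.ofReal 1 by simp]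
    exact ENNReal.ofReal_le_ofReal hdp

/-- **Example 4.2**: the bottleneck dissimilarity `d̂_B` on 2-dimensional signed barcodes
does not satisfy the triangle inequality: `d̂_B(B, C_k) ≤ 1/k` and `d̂_B(C_k, D) ≤ 1/k`
while `d̂_B(B, D) = 1`. -/
theorem dBhat_fails_triangle_inequality :
    (∀ kk : ℕ, 1 ≤ kk →
      dBhat Bsb (Csb kk) ≤ ENNReal.ofReal (1 / (kk : ℝ)) ∧
      dBhat (Csb kk) Dsb ≤ ENNReal.ofReal (1 / (kk : ℝ)) ∧
      dBhat Bsb Dsb = 1) ∧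
    ¬ (∀ X Y Z : SignedBarcode 2, dBhat X Z ≤ dBhat X Y + dBhat Y Z) := by
  refine ⟨fun kk hkk => ⟨dBhat_B_C kk hkk, dBhat_C_D kk hkk, dBhat_B_D⟩, ?_⟩
  intro h
  have h3 := h Bsb (Csb 3) Dsb
  have hle : dBhat Bsb Dsb ≤ ENNReal.ofReal (1/(3:ℝ)) + ENNReal.ofReal (1/(3:ℝ)) :=
    h3.trans (add_le_add (dBhat_B_C 3 (by norm_num)) (dBhat_C_D 3 (by norm_num)))
  rw [dBhat_B_D, ← ENNReal.ofReal_add (by norm_num) (by norm_num),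
    show (1 : ℝ≥0∞) = ENNReal.ofReal 1 by simp] at hle
  have := (ENNReal.ofReal_le_ofReal_iff (by norm_num)).mp hle
  norm_num at this

end
end

section
/- 1-Wasserstein stability of minimal Hilbert decompositions (Theorem 1.5, presentation form). Let M and N be finitely presentable 2-parameter persistence modules admitting presentation matrices P_M and P_N with the same underlying matrix μ ∈ k^{r×c}. Let (P, Q) be a minimal Hilbert decomposition of Hil(M) and (P', Q') a minimal Hilbert decomposition of Hil(N). Then d_{W¹}(ℬ(P) ∪ ℬ(Q'), ℬ(P') ∪ ℬ(Q)) ≤ 2 ∑_{i=1}^{r+c} ‖L(P_M)(i) − L(P_N)(i)‖_1. (Equivalently, since the left-hand side defines an extended pseudodistance on modules, d̂_{W¹}(ĤB(M), ĤB(N)) ≤ 2·d_I¹(M,N), where d_I¹ is the 1-presentation distance, the largest extended pseudodistance bounded above by the infimum of ∑_i ‖L(P_M)(i) − L(P_N)(i)‖_1 over pairs of presentation matrices with the same underlying matrix.) -/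
set_option linter.unusedVariables false
set_option maxHeartbeats 800000

open scoped Classical ENNReal

noncomputable section

variable {k : Type} [Field k] {n : ℕ}

/-- The linear map, at index `x`, underlying the morphism of free modules determined by a
presentation matrix: its `(i,j)` component is `μ i j` times the canonical monomorphism
`F_{Lcol j} → F_{Lrow i}`. -/
def presMap {r c : ℕ} (μ : Matrix (Fin r) (Fin c) k)
    (Lrow : Fin r → Pt 2) (Lcol : Fin c → Pt 2) (x : Pt 2) :
    ((freeModFin Lcol : PersMod k 2).X x) →ₗ[k] ((freeModFin Lrow : PersMod k 2).X x) :=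
  LinearMap.pi fun i => ∑ j : {j : Fin c // Lcol j ≤ x}, μ i.1 j.1 • LinearMap.proj j

/-- The presentation matrix with labels `Lrow`, `Lcol` and underlying matrix `μ`
is a presentation matrix of `M`: `M` is isomorphic to the cokernel of the morphism
`⊕_j F_{Lcol j} → ⊕_i F_{Lrow i}` determined by `μ`. -/
def Presents {r c : ℕ} (μ : Matrix (Fin r) (Fin c) k)
    (Lrow : Fin r → Pt 2) (Lcol : Fin c → Pt 2) (M : PersMod k 2) : Prop :=
  (∀ i j, μ i j ≠ 0 → Lrow i ≤ Lcol j) ∧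
  ∃ g : PersHom (freeModFin Lrow) M,
    (∀ x, Function.Surjective (g.app x)) ∧
    (∀ x, LinearMap.range (presMap μ Lrow Lcol x) = LinearMap.ker (g.app x))


/-! ### Auxiliary lemmas -/

section Aux

lemma countLe_zero (x : Pt n) : countLe (0 : Multiset (Pt n)) x = 0 := rfl

lemma countLe_cons (a : Pt n) (s : Multiset (Pt n)) (x : Pt n) :
    countLe (a ::ₘ s) x = (if a ≤ x then 1 else 0) + countLe s x := by
  unfold countLe
  rw [Multiset.filter_cons, Multiset.card_add]
  by_cases h : a ≤ x <;> simp [h]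

lemma countLe_add (s t : Multiset (Pt n)) (x : Pt n) :
    countLe (s + t) x = countLe s x + countLe t x := by
  unfold countLe
  rw [Multiset.filter_add, Multiset.card_add]

lemma countLe_singleton (a : Pt n) (x : Pt n) :
    countLe ({a} : Multiset (Pt n)) x = if a ≤ x then 1 else 0 := by
  have : ({a} : Multiset (Pt n)) = a ::ₘ 0 := rfl
  rw [this, countLe_cons, countLe_zero, add_zero]

lemma l1dist_nonneg (a b : Pt n) : 0 ≤ l1dist a b :=
  Finset.sum_nonneg fun i _ => abs_nonneg _

lemma l1dist_self (a : Pt n) : l1dist a a = 0 := by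
  simp [l1dist]

lemma l1dist_comm (a b : Pt n) : l1dist a b = l1dist b a := by
  unfold l1dist
  apply Finset.sum_congr rfl
  intro i _
  exact abs_sub_comm _ _

lemma l1dist_triangle (a b c : Pt n) : l1dist a c ≤ l1dist a b + l1dist b c := by
  unfold l1dist
  rw [← Finset.sum_add_distrib]
  apply Finset.sum_le_sum
  intro i _
  exact abs_sub_le _ _ _

lemma l1dist_eq_of_eq_off (a b : Pt n) (d : Fin n) (h : ∀ i, i ≠ d → a i = b i) :
    l1dist a b = |a d - b d| := by
  unfold l1dist
  rw [Finset.sum_eq_single d]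
  · intro i _ hi; rw [h i hi]; simp
  · intro h'; exact absurd (Finset.mem_univ d) h'

lemma l1dist_update_self (a : Pt n) (d : Fin n) (v : ℝ) :
    l1dist a (Function.update a d v) = |a d - v| := by
  have := l1dist_eq_of_eq_off a (Function.update a d v) d
    (fun i hi => (Function.update_of_ne hi v a).symm)
  rw [this, Function.update_self]

lemma l1dist_update_add (a b : Pt n) (d : Fin n) :
    l1dist (Function.update a d (b d)) b + |a d - b d| = l1dist a b := by
  unfold l1dist
  rw [← Finset.sum_erase_add _ _ (Finset.mem_univ d),
      ← Finset.sum_erase_add _ (fun i => |a i - b i|) (Finset.mem_univ d)]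
  have h1 : ∀ x ∈ Finset.univ.erase d,
      |Function.update a d (b d) x - b x| = |a x - b x| := by
    intro x hx
    rw [Function.update_of_ne (Finset.ne_of_mem_erase hx)]
  rw [Finset.sum_congr rfl h1, Function.update_self, sub_self, abs_zero, add_zero]

lemma matchCost_zero : matchCost (0 : Multiset (Pt n × Pt n)) = 0 := rfl

lemma matchCost_cons (p : Pt n × Pt n) (m : Multiset (Pt n × Pt n)) :
    matchCost (p ::ₘ m) = l1dist p.1 p.2 + matchCost m := by
  unfold matchCost
  rw [Multiset.map_cons, Multiset.sum_cons]

lemma matchCost_add (m₁ m₂ : Multiset (Pt n × Pt n)) :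
    matchCost (m₁ + m₂) = matchCost m₁ + matchCost m₂ := by
  unfold matchCost
  rw [Multiset.map_add, Multiset.sum_add]

lemma matchCost_nonneg (m : Multiset (Pt n × Pt n)) : 0 ≤ matchCost m := by
  induction m using Multiset.induction_on with
  | empty => rw [matchCost_zero]
  | cons a s ih =>
    rw [matchCost_cons]
    exact add_nonneg (l1dist_nonneg _ _) ih

lemma matchCost_swap (m : Multiset (Pt n × Pt n)) :
    matchCost (m.map Prod.swap) = matchCost m := by
  unfold matchCost
  rw [Multiset.map_map]
  congr 1
  apply Multiset.map_congr rfl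
  intro p _
  exact l1dist_comm _ _

lemma matchCost_diag (B : Multiset (Pt n)) :
    matchCost (B.map (fun a => (a, a))) = 0 := by
  unfold matchCost
  rw [Multiset.map_map]
  have : Multiset.map (fun a => l1dist a a) B = Multiset.map (fun _ => (0:ℝ)) B := by
    apply Multiset.map_congr rfl
    intro a _; exact l1dist_self a
  show (Multiset.map (fun a => l1dist a a) B).sum = 0
  rw [this]
  simp

/-- Cancel one common point from both marginals of a matching. -/
lemma cancel_one (z : Pt n) (B C : Multiset (Pt n)) (m : Multiset (Pt n × Pt n))
    (hf : m.map Prod.fst = z ::ₘ B) (hs : m.map Prod.snd = z ::ₘ C) :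
    ∃ m' : Multiset (Pt n × Pt n),
      m'.map Prod.fst = B ∧ m'.map Prod.snd = C ∧ matchCost m' ≤ matchCost m := by
  by_cases hzz : (z, z) ∈ m
  · obtain ⟨m', rfl⟩ : ∃ m', m = (z,z) ::ₘ m' := ⟨m.erase (z,z), (Multiset.cons_erase hzz).symm⟩
    refine ⟨m', ?_, ?_, ?_⟩
    · rw [Multiset.map_cons] at hf; exact (Multiset.cons_inj_right _).1 hf
    · rw [Multiset.map_cons] at hs; exact (Multiset.cons_inj_right _).1 hs
    · rw [matchCost_cons, l1dist_self]; linarith [le_refl (matchCost m')]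
  · have hz1 : z ∈ m.map Prod.fst := by rw [hf]; exact Multiset.mem_cons_self _ _
    obtain ⟨p1, hmem1, hp1⟩ := Multiset.mem_map.1 hz1
    have hz2 : z ∈ m.map Prod.snd := by rw [hs]; exact Multiset.mem_cons_self _ _
    obtain ⟨p2, hmem2, hp2⟩ := Multiset.mem_map.1 hz2
    set u := p1.2 with hu
    set v := p2.1 with hv
    have e1 : p1 = (z, u) := by rw [hu, ← hp1]
    have e2 : p2 = (v, z) := by rw [hv, ← hp2]
    rw [e1] at hmem1
    rw [e2] at hmem2
    have hne : (v, z) ≠ (z, u) := by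
      intro h
      apply hzz
      have h1 : v = z := congrArg Prod.fst h
      have h2 : z = u := congrArg Prod.snd h
      rw [← h2] at hmem1
      exact hmem1
    have hmem2' : (v, z) ∈ m.erase (z, u) := (Multiset.mem_erase_of_ne hne).2 hmem2
    obtain ⟨rest, hrest⟩ : ∃ rest, m = (z,u) ::ₘ (v,z) ::ₘ rest := by
      refine ⟨(m.erase (z,u)).erase (v,z), ?_⟩
      rw [Multiset.cons_erase hmem2', Multiset.cons_erase hmem1]
    subst hrest
    refine ⟨(v, u) ::ₘ rest, ?_, ?_, ?_⟩
    · rw [Multiset.map_cons]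
      rw [Multiset.map_cons, Multiset.map_cons] at hf
      exact (Multiset.cons_inj_right _).1 hf
    · rw [Multiset.map_cons]
      rw [Multiset.map_cons, Multiset.map_cons] at hs
      have h2 : u ::ₘ z ::ₘ rest.map Prod.snd = z ::ₘ C := hs
      rw [Multiset.cons_swap] at h2
      exact (Multiset.cons_inj_right _).1 h2
    · rw [matchCost_cons, matchCost_cons, matchCost_cons]
      have := l1dist_triangle v z u
      simp only
      linarith

/-- Cancel a common sub-multiset from both marginals of a matching. -/
lemma cancel_many (Z : Multiset (Pt n)) :
    ∀ (B C : Multiset (Pt n)) (m : Multiset (Pt n × Pt n)),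
      m.map Prod.fst = B + Z → m.map Prod.snd = C + Z →
      ∃ m' : Multiset (Pt n × Pt n),
        m'.map Prod.fst = B ∧ m'.map Prod.snd = C ∧ matchCost m' ≤ matchCost m := by
  induction Z using Multiset.induction_on with
  | empty =>
    intro B C m hf hs
    exact ⟨m, by simpa using hf, by simpa using hs, le_refl _⟩
  | cons z Z ih =>
    intro B C m hf hs
    have hf' : m.map Prod.fst = z ::ₘ (B + Z) := by
      rw [hf]; rw [Multiset.add_cons]
    have hs' : m.map Prod.snd = z ::ₘ (C + Z) := by
      rw [hs]; rw [Multiset.add_cons]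
    obtain ⟨m₁, h1, h2, h3⟩ := cancel_one z (B + Z) (C + Z) m hf' hs'
    obtain ⟨m', h1', h2', h3'⟩ := ih B C m₁ h1 h2
    exact ⟨m', h1', h2', le_trans h3' h3⟩

/-- `countLe` determines the multiset. -/
lemma countLe_inj : ∀ (B C : Multiset (Pt n)), (∀ x, countLe B x = countLe C x) → B = C := by
  intro B
  induction B using Multiset.strongInductionOn with
  | ih B IH =>
    intro C h
    rcases eq_or_ne B 0 with rfl | hB
    · by_contra hC
      obtain ⟨c, hc⟩ := Multiset.exists_mem_of_ne_zero (Ne.symm hC)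
      have : 0 < countLe C c := by
        unfold countLe
        rw [Multiset.card_pos]
        intro h0
        have : c ∈ Multiset.filter (fun i => i ≤ c) C := Multiset.mem_filter.2 ⟨hc, le_refl c⟩
        rw [h0] at this
        exact absurd this (Multiset.notMem_zero c)
      rw [← h c] at this
      simp [countLe_zero] at this
    · -- find a minimal element of B + C
      obtain ⟨b₀, hb₀⟩ := Multiset.exists_mem_of_ne_zero hB
      have hb₀' : b₀ ∈ (B + C).toFinset := Multiset.mem_toFinset.2 (by
        rw [Multiset.mem_add]; exact Or.inl hb₀)
      set s : Finset (Pt n) := (B + C).toFinset.filter (fun a => a ≤ b₀) with hs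
      have hsne : s.Nonempty := ⟨b₀, Finset.mem_filter.2 ⟨hb₀', le_refl _⟩⟩
      obtain ⟨z, hzs, hzmin⟩ : ∃ z ∈ s, ∀ x ∈ s, ¬ x < z := by
        obtain ⟨z, hz, hmin⟩ := Finset.exists_minimal hsne
        exact ⟨z, hz, fun x hx hlt => hlt.not_ge (hmin hx hlt.le)⟩
      have hz_mem : z ∈ B + C := Multiset.mem_toFinset.1 (Finset.mem_filter.1 hzs).1
      have hz_le : z ≤ b₀ := (Finset.mem_filter.1 hzs).2
      have hmin : ∀ a ∈ B + C, a ≤ z → a = z := by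
        intro a ha haz
        have has : a ∈ s := Finset.mem_filter.2 ⟨Multiset.mem_toFinset.2 ha, le_trans haz hz_le⟩
        by_contra hne
        exact hzmin a has (lt_of_le_of_ne haz hne)
      -- countLe at z counts copies of z
      have key : ∀ D : Multiset (Pt n), (∀ a ∈ D, a ∈ B + C) → countLe D z = D.count z := by
        intro D hD
        unfold countLe
        rw [Multiset.count_eq_card_filter_eq]
        congr 1
        apply Multiset.filter_congr
        intro a ha
        constructor
        · intro h'; exact ((hmin a (hD a ha) h')).symm
        · intro h'; rw [← h']
      have hBz : countLe B z = B.count z := key B (fun a ha => Multiset.mem_add.2 (Or.inl ha))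
      have hCz : countLe C z = C.count z := key C (fun a ha => Multiset.mem_add.2 (Or.inr ha))
      have hcount : B.count z = C.count z := by rw [← hBz, ← hCz, h z]
      have hzBC : z ∈ B ∨ z ∈ C := Multiset.mem_add.1 hz_mem
      have hzB : z ∈ B := by
        rcases hzBC with h' | h'
        · exact h'
        · have h2 : 0 < Multiset.count z C := Multiset.count_pos.2 h'
          rw [← hcount] at h2
          exact Multiset.count_pos.1 h2
      have hzC : z ∈ C := by
        have h2 : 0 < Multiset.count z B := Multiset.count_pos.2 hzB
        rw [hcount] at h2
        exact Multiset.count_pos.1 h2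
      obtain ⟨B', rfl⟩ : ∃ B', B = z ::ₘ B' := ⟨B.erase z, (Multiset.cons_erase hzB).symm⟩
      obtain ⟨C', rfl⟩ : ∃ C', C = z ::ₘ C' := ⟨C.erase z, (Multiset.cons_erase hzC).symm⟩
      have hB'C' : ∀ x, countLe B' x = countLe C' x := by
        intro x
        have := h x
        rw [countLe_cons, countLe_cons] at this
        omega
      rw [IH B' (Multiset.lt_cons_self B' z) C' hB'C']

end Aux


/-! ### Linear algebra auxiliaries -/

section LinAlgAux

variable {r c : ℕ}

/-- The `j`-th column of `μ`, as a vector. -/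
def colfun (μ : Matrix (Fin r) (Fin c) k) (j : Fin c) : Fin r → k := fun i => μ i j

/-- Span of a set of columns of `μ`. -/
def spanCols (μ : Matrix (Fin r) (Fin c) k) (S : Set (Fin c)) : Submodule k (Fin r → k) :=
  Submodule.span k (colfun μ '' S)

/-- Rank of a set of columns of `μ`. -/
def rkS (μ : Matrix (Fin r) (Fin c) k) (S : Set (Fin c)) : ℕ :=
  Module.finrank k (spanCols μ S)

/-- The set of columns whose label is below `x`. -/
def Scol (Lc : Fin c → Pt 2) (x : Pt 2) : Set (Fin c) := {j | Lc j ≤ x}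

lemma spanCols_mono (μ : Matrix (Fin r) (Fin c) k) {S T : Set (Fin c)} (h : S ⊆ T) :
    spanCols μ S ≤ spanCols μ T :=
  Submodule.span_mono (Set.image_mono h)

lemma rkS_insert (μ : Matrix (Fin r) (Fin c) k) (j : Fin c) (S : Set (Fin c)) :
    rkS μ (insert j S) = rkS μ S + (if colfun μ j ∈ spanCols μ S then 0 else 1) := by
  by_cases h : colfun μ j ∈ spanCols μ S
  · rw [if_pos h, add_zero]
    unfold rkS spanCols
    rw [Set.image_insert_eq]
    rw [Submodule.span_insert_eq_span h]
  · rw [if_neg h]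
    unfold rkS spanCols at h ⊢
    rw [Set.image_insert_eq, Submodule.span_insert]
    have hj0 : colfun μ j ≠ 0 := fun h0 => h (h0 ▸ (Submodule.zero_mem _))
    have hinf : (k ∙ colfun μ j) ⊓ Submodule.span k (colfun μ '' S) = ⊥ := by
      rw [eq_bot_iff]
      intro v hv
      have hv1 : v ∈ (k ∙ colfun μ j) := hv.1
      have hv2 : v ∈ Submodule.span k (colfun μ '' S) := hv.2
      obtain ⟨a, ha⟩ := Submodule.mem_span_singleton.1 hv1
      rcases eq_or_ne a 0 with rfl | ha0
      · simp only [zero_smul] at ha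
        rw [← ha]
        exact Submodule.zero_mem _
      · exfalso
        apply h
        have : colfun μ j = a⁻¹ • v := by
          rw [← ha, smul_smul, inv_mul_cancel₀ ha0, one_smul]
        rw [this]
        exact Submodule.smul_mem _ _ hv2
    have hkey := Submodule.finrank_sup_add_finrank_inf_eq (k ∙ colfun μ j)
      (Submodule.span k (colfun μ '' S))
    rw [hinf, finrank_bot, finrank_span_singleton hj0, add_zero] at hkey
    omega

lemma rank_presMap (μ : Matrix (Fin r) (Fin c) k) (Lr : Fin r → Pt 2) (Lc : Fin c → Pt 2)
    (hvalid : ∀ i j, μ i j ≠ 0 → Lr i ≤ Lc j) (x : Pt 2) :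
    Module.finrank k (LinearMap.range (presMap μ Lr Lc x)) = rkS μ (Scol Lc x) := by
  let σ : ({i : Fin r // Lr i ≤ x} → k) →ₗ[k] (Fin r → k) :=
    { toFun := fun g i => if h : Lr i ≤ x then g ⟨i, h⟩ else 0
      map_add' := by intro f g; funext i; by_cases h : Lr i ≤ x <;> simp [h]
      map_smul' := by intro a f; funext i; by_cases h : Lr i ≤ x <;> simp [h] }
  have hσinj : Function.Injective σ := by
    intro f g hfg
    funext i
    have h1 := congrFun hfg i.1
    have e1 : σ f i.1 = f i := by
      show (if h : Lr i.1 ≤ x then f ⟨i.1, h⟩ else 0) = f i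
      rw [dif_pos i.2]
    have e2 : σ g i.1 = g i := by
      show (if h : Lr i.1 ≤ x then g ⟨i.1, h⟩ else 0) = g i
      rw [dif_pos i.2]
    rw [e1, e2] at h1
    exact h1
  have hcomp : σ.comp (presMap μ Lr Lc x)
      = Fintype.linearCombination k (fun j : {j : Fin c // Lc j ≤ x} => colfun μ j.1) := by
    apply LinearMap.ext
    intro f
    funext i
    have hlhs : (σ.comp (presMap μ Lr Lc x)) f i
        = if h : Lr i ≤ x then
            ∑ j : {j : Fin c // Lc j ≤ x}, μ i j.1 * f j else 0 := by
      show (if h : Lr i ≤ x then (presMap μ Lr Lc x f) ⟨i, h⟩ else 0) = _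
      by_cases h : Lr i ≤ x
      · rw [dif_pos h, dif_pos h]
        show (∑ j : {j : Fin c // Lc j ≤ x}, μ i j.1 • LinearMap.proj j) f = _
        refine (LinearMap.sum_apply _ _ _).trans ?_
        apply Finset.sum_congr rfl
        intro j _
        rfl
      · rw [dif_neg h, dif_neg h]
    refine hlhs.trans ?_
    show (if h : Lr i ≤ x then ∑ j : {j : Fin c // Lc j ≤ x}, μ i j.1 * f j else 0)
        = (∑ j : {j : Fin c // Lc j ≤ x}, f j • colfun μ j.1) i
    rw [Finset.sum_apply]
    by_cases h : Lr i ≤ x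
    · rw [dif_pos h]
      apply Finset.sum_congr rfl
      intro j _
      show μ i j.1 * f j = (f j • colfun μ j.1) i
      rw [Pi.smul_apply, smul_eq_mul, mul_comm]
      rfl
    · rw [dif_neg h]
      symm
      apply Finset.sum_eq_zero
      intro j _
      have hz : μ i j.1 = 0 := by
        by_contra hμ
        exact h (le_trans (hvalid i j.1 hμ) j.2)
      show (f j • colfun μ j.1) i = 0
      rw [Pi.smul_apply, smul_eq_mul]
      show f j * μ i j.1 = 0
      rw [hz, mul_zero]
  have hmap : Submodule.map σ (LinearMap.range (presMap μ Lr Lc x)) = spanCols μ (Scol Lc x) := by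
    rw [show Submodule.map σ (LinearMap.range (presMap μ Lr Lc x))
        = LinearMap.range (σ.comp (presMap μ Lr Lc x)) from (LinearMap.range_comp _ _).symm,
      hcomp]
    refine (Fintype.range_linearCombination ..).trans ?_
    unfold spanCols
    congr 1
    have : (fun j : {j : Fin c // Lc j ≤ x} => colfun μ j.1)
        = colfun μ ∘ (Subtype.val : {j : Fin c // Lc j ≤ x} → Fin c) := rfl
    rw [this, Set.range_comp, Subtype.range_coe_subtype]
    rfl
  have hfr := LinearEquiv.finrank_eq
    (Submodule.equivMapOfInjective σ hσinj (LinearMap.range (presMap μ Lr Lc x)))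
  rw [hmap] at hfr
  exact hfr

/-- The Hilbert function of a module presented by `(μ, Lr, Lc)`. -/
lemma hil_presents {M : PersMod k 2} {μ : Matrix (Fin r) (Fin c) k}
    {Lr : Fin r → Pt 2} {Lc : Fin c → Pt 2} (hP : Presents μ Lr Lc M) (x : Pt 2) :
    (Hil M x : ℤ) = (Fintype.card {i : Fin r // Lr i ≤ x} : ℤ) - rkS μ (Scol Lc x) := by
  obtain ⟨hvalid, g, hsurj, hker⟩ := hP
  have hdom : Module.finrank k ((freeModFin Lr : PersMod k 2).X x)
      = Fintype.card {i : Fin r // Lr i ≤ x} := by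
    show Module.finrank k ({i : Fin r // Lr i ≤ x} → k) = _
    rw [Module.finrank_pi]
  have hrn := LinearMap.finrank_range_add_finrank_ker (g.app x)
  have hrange : Module.finrank k (LinearMap.range (g.app x)) = Hil M x := by
    rw [LinearMap.range_eq_top.2 (hsurj x), finrank_top]
    rfl
  have hkerr : Module.finrank k (LinearMap.ker (g.app x)) = rkS μ (Scol Lc x) := by
    rw [← hker x]
    exact rank_presMap μ Lr Lc hvalid x
  rw [hrange, hkerr, hdom] at hrn
  omega

/-- The Hilbert function of a free module with barcode `B`. -/
lemma hil_free {P : PersMod k 2} {B : Multiset (Pt 2)} (hP : IsFreeWith P B) (x : Pt 2) :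
    Hil P x = countLe B x := by
  obtain ⟨m, L, hB, f, g, hgf, hfg⟩ := hP
  have hiso : Module.finrank k (P.X x) = Module.finrank k ((freeModFin L : PersMod k 2).X x) := by
    have e : P.X x ≃ₗ[k] (freeModFin L : PersMod k 2).X x :=
      LinearEquiv.ofLinear (f.app x) (g.app x) (hfg x) (hgf x)
    exact e.finrank_eq
  have hcard : Module.finrank k ((freeModFin L : PersMod k 2).X x)
      = countLe B x := by
    show Module.finrank k ({i : Fin m // L i ≤ x} → k) = _
    rw [Module.finrank_pi, Fintype.card_subtype, hB]
    unfold countLe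
    rw [← Fin.univ_val_map, Multiset.filter_map, Multiset.card_map]
    rw [Finset.card_def, Finset.filter_val]
    rfl
  rw [← hcard, ← hiso]
  rfl

lemma card_subtype_eq_countLe {m : ℕ} (L : Fin m → Pt 2) (x : Pt 2) :
    (Fintype.card {i : Fin m // L i ≤ x}) = countLe (Multiset.map L Finset.univ.val) x := by
  rw [Fintype.card_subtype]
  unfold countLe
  rw [Multiset.filter_map, Multiset.card_map, Finset.card_def, Finset.filter_val]
  rfl

end LinAlgAux


/-! ### Moving column labels -/

section MoveAux

variable {r c : ℕ}

/-- The other index of `Fin 2`. -/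
def oth (d : Fin 2) : Fin 2 := if d = 0 then 1 else 0

lemma oth_ne (d : Fin 2) : oth d ≠ d := by
  fin_cases d <;> simp [oth]

lemma fin2_eq_or (i d : Fin 2) : i = d ∨ i = oth d := by
  fin_cases i <;> fin_cases d <;> simp [oth]

lemma le2 (a x : Pt 2) (d : Fin 2) : a ≤ x ↔ a d ≤ x d ∧ a (oth d) ≤ x (oth d) := by
  constructor
  · intro h; exact ⟨h d, h (oth d)⟩
  · rintro ⟨h1, h2⟩ i
    rcases fin2_eq_or i d with rfl | rfl
    · exact h1
    · exact h2

/-- There are `X⁺, X⁻` realizing the difference of column-rank functions of `La`, `Lb`,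
    matched at cost at most `C`. -/
def ColDecompC (μ : Matrix (Fin r) (Fin c) k) (La Lb : Fin c → Pt 2) (C : ℝ) : Prop :=
  ∃ (Xp Xm : Multiset (Pt 2)) (m : Multiset (Pt 2 × Pt 2)),
    (∀ x, (rkS μ (Scol La x) : ℤ) - (rkS μ (Scol Lb x) : ℤ)
        = (countLe Xp x : ℤ) - (countLe Xm x : ℤ)) ∧
    m.map Prod.fst = Xp ∧ m.map Prod.snd = Xm ∧ matchCost m ≤ C

lemma colDecompC_mono {μ : Matrix (Fin r) (Fin c) k} {La Lb : Fin c → Pt 2} {C C' : ℝ}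
    (h : ColDecompC μ La Lb C) (hC : C ≤ C') : ColDecompC μ La Lb C' := by
  obtain ⟨Xp, Xm, m, h1, h2, h3, h4⟩ := h
  exact ⟨Xp, Xm, m, h1, h2, h3, le_trans h4 hC⟩

lemma colDecompC_refl (μ : Matrix (Fin r) (Fin c) k) (La : Fin c → Pt 2) :
    ColDecompC μ La La 0 := by
  refine ⟨0, 0, 0, ?_, rfl, rfl, le_of_eq matchCost_zero⟩
  intro x
  rw [countLe_zero, sub_self]
  ring

lemma colDecompC_symm {μ : Matrix (Fin r) (Fin c) k} {La Lb : Fin c → Pt 2} {C : ℝ}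
    (h : ColDecompC μ La Lb C) : ColDecompC μ Lb La C := by
  obtain ⟨Xp, Xm, m, h1, h2, h3, h4⟩ := h
  refine ⟨Xm, Xp, m.map Prod.swap, ?_, ?_, ?_, ?_⟩
  · intro x; have := h1 x; linarith
  · rw [Multiset.map_map]
    have e : (Prod.fst ∘ Prod.swap : Pt 2 × Pt 2 → Pt 2) = Prod.snd := rfl
    rw [e]; exact h3
  · rw [Multiset.map_map]
    have e : (Prod.snd ∘ Prod.swap : Pt 2 × Pt 2 → Pt 2) = Prod.fst := rfl
    rw [e]; exact h2
  · rw [matchCost_swap]; exact h4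

lemma colDecompC_trans {μ : Matrix (Fin r) (Fin c) k} {La Lb Lc' : Fin c → Pt 2} {C1 C2 : ℝ}
    (h : ColDecompC μ La Lb C1) (h' : ColDecompC μ Lb Lc' C2) :
    ColDecompC μ La Lc' (C1 + C2) := by
  obtain ⟨Xp1, Xm1, m1, he1, hf1, hs1, hc1⟩ := h
  obtain ⟨Xp2, Xm2, m2, he2, hf2, hs2, hc2⟩ := h'
  refine ⟨Xp1 + Xp2, Xm1 + Xm2, m1 + m2, ?_, ?_, ?_, ?_⟩
  · intro x
    rw [countLe_add, countLe_add]
    push_cast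
    linarith [he1 x, he2 x]
  · rw [Multiset.map_add, hf1, hf2]
  · rw [Multiset.map_add, hs1, hs2]
  · rw [matchCost_add]; linarith

/-- Base case: moving one column label up in one coordinate, with no other label's
`d`-coordinate strictly inside the move interval. -/
lemma col_move_base (μ : Matrix (Fin r) (Fin c) k) (La : Fin c → Pt 2) (j : Fin c)
    (d : Fin 2) (s : ℝ) (hps : La j d ≤ s)
    (hcrit : ∀ j', j' ≠ j → ¬(La j d < La j' d ∧ La j' d < s)) :
    ColDecompC μ La (Function.update La j (Function.update (La j) d s))
      (2 * (s - La j d)) := by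
  set p := La j with hp
  set d' := oth d with hd'
  have hdd' : (d : Fin 2) ≠ d' := (oth_ne d).symm
  rcases eq_or_lt_of_le hps with heq | hlt
  · have hLb : Function.update La j (Function.update (La j) d s) = La := by
      rw [← heq]
      rw [Function.update_eq_self]
      exact Function.update_eq_self j La
    rw [hLb]
    exact colDecompC_mono (colDecompC_refl μ La) (by linarith)
  set Lb := Function.update La j (Function.update p d s) with hLbdef
  have hLbj : Lb j = Function.update p d s := Function.update_self j _ La
  have hLbj' : ∀ j', j' ≠ j → Lb j' = La j' := fun j' hj' => Function.update_of_ne hj' _ La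
  have hLbjd : Lb j d = s := by rw [hLbj]; exact Function.update_self d s p
  have hLbjd' : Lb j d' = p d' := by rw [hLbj]; exact Function.update_of_ne (oth_ne d) s p
  -- p ≤ Lb j
  have hpLbj : p ≤ Lb j := by
    rw [le2 _ _ d, hLbjd, hLbjd']
    exact ⟨hps, le_refl _⟩
  -- auxiliary set function and dependence predicate
  set T : ℝ → Set (Fin c) := fun y => {j' | j' ≠ j ∧ La j' d ≤ p d ∧ La j' d' ≤ y} with hT
  set dep : ℝ → Prop := fun y => colfun μ j ∈ spanCols μ (T y) with hdep
  have hTmono : ∀ {y y'}, y ≤ y' → T y ⊆ T y' := by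
    intro y y' hyy j' hj'
    exact ⟨hj'.1, hj'.2.1, le_trans hj'.2.2 hyy⟩
  have hdepmono : ∀ {y y'}, y ≤ y' → dep y → dep y' := by
    intro y y' hyy hd
    exact spanCols_mono μ (hTmono hyy) hd
  -- Set computations
  have K2 : ∀ x, ¬ p ≤ x → Scol La x = Scol Lb x := by
    intro x hx
    ext j'
    by_cases hj' : j' = j
    · subst hj'
      constructor
      · intro h; exact absurd h hx
      · intro h; exact absurd (le_trans hpLbj h) hx
    · show La j' ≤ x ↔ Lb j' ≤ x
      rw [hLbj' j' hj']
  have K3 : ∀ x, p ≤ x → s ≤ x d → Scol La x = Scol Lb x := by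
    intro x hx hxd
    ext j'
    by_cases hj' : j' = j
    · subst hj'
      constructor
      · intro _
        show Lb j' ≤ x
        rw [le2 _ _ d, hLbjd, hLbjd']
        exact ⟨hxd, hx d'⟩
      · intro _; exact hx
    · show La j' ≤ x ↔ Lb j' ≤ x
      rw [hLbj' j' hj']
  have K1a : ∀ x, p ≤ x → x d < s → Scol La x = insert j (T (x d')) := by
    intro x hx hxd
    ext j'
    by_cases hj' : j' = j
    · subst hj'
      constructor
      · intro _; exact Set.mem_insert _ _
      · intro _; exact hx
    · show La j' ≤ x ↔ _
      simp only [Set.mem_insert_iff, hT, Set.mem_setOf_eq]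
      rw [le2 _ _ d]
      constructor
      · rintro ⟨h1, h2⟩
        refine Or.inr ⟨hj', ?_, h2⟩
        by_contra hgt
        push_neg at hgt
        exact hcrit j' hj' ⟨hgt, lt_of_le_of_lt h1 hxd⟩
      · rintro (h | ⟨_, h1, h2⟩)
        · exact absurd h hj'
        · exact ⟨le_trans h1 (hx d), h2⟩
  have K1b : ∀ x, p ≤ x → x d < s → Scol Lb x = T (x d') := by
    intro x hx hxd
    ext j'
    by_cases hj' : j' = j
    · subst hj'
      constructor
      · intro h
        exfalso
        have := (le2 _ _ d).1 h
        rw [hLbjd] at this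
        exact absurd this.1 (not_le.2 hxd)
      · intro h
        exact absurd rfl h.1
    · show Lb j' ≤ x ↔ _
      rw [hLbj' j' hj']
      show La j' ≤ x ↔ _
      simp only [hT, Set.mem_setOf_eq]
      rw [le2 _ _ d]
      constructor
      · rintro ⟨h1, h2⟩
        refine ⟨hj', ?_, h2⟩
        by_contra hgt
        push_neg at hgt
        exact hcrit j' hj' ⟨hgt, lt_of_le_of_lt h1 hxd⟩
      · rintro ⟨_, h1, h2⟩
        exact ⟨le_trans h1 (hx d), h2⟩
  have strip : ∀ x, p ≤ x → x d < s →
      (rkS μ (Scol La x) : ℤ) - (rkS μ (Scol Lb x) : ℤ)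
        = if dep (x d') then 0 else 1 := by
    intro x hx hxd
    rw [K1a x hx hxd, K1b x hx hxd, rkS_insert]
    by_cases h : dep (x d')
    · rw [if_pos h]
      have : colfun μ j ∈ spanCols μ (T (x d')) := h
      rw [if_pos this]
      push_cast
      ring
    · rw [if_neg h]
      have : colfun μ j ∉ spanCols μ (T (x d')) := h
      rw [if_neg this]
      push_cast
      ring
  by_cases h0 : dep (p d')
  · -- always dependent on the strip: no change
    refine ⟨0, 0, 0, ?_, rfl, rfl, ?_⟩
    · intro x
      rw [countLe_zero]
      by_cases hx : p ≤ x
      · by_cases hxd : s ≤ x d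
        · rw [K3 x hx hxd]; push_cast; try ring
        · have h1 := strip x hx (not_le.1 hxd)
          have h2 : dep (x d') := hdepmono (hx d') h0
          rw [if_pos h2] at h1
          rw [h1]; push_cast; try ring
      · rw [K2 x hx]; push_cast; try ring
    · rw [matchCost_zero]; linarith
  · by_cases hW : ∃ y, dep y
    · -- caught at level w: box case
      obtain ⟨y₀, hy₀⟩ := hW
      have hTne : ∀ y, dep y → (T y).Nonempty := by
        intro y hy
        by_contra hne
        rw [Set.not_nonempty_iff_eq_empty] at hne
        apply h0
        have : colfun μ j = 0 := by
          have h1 : colfun μ j ∈ spanCols μ (∅ : Set (Fin c)) := hne ▸ hy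
          unfold spanCols at h1
          rw [Set.image_empty, Submodule.span_empty, Submodule.mem_bot] at h1
          exact h1
        show colfun μ j ∈ spanCols μ (T (p d'))
        rw [this]
        exact Submodule.zero_mem _
      -- candidate levels
      set G : Finset (Fin c) := Finset.univ.filter (fun j' => j' ≠ j ∧ La j' d ≤ p d) with hG
      set YF : Finset ℝ := G.image (fun j' => La j' d') with hYF
      have hmemYF : ∀ y, dep y → ∃ m ∈ YF, m ≤ y ∧ dep m := by
        intro y hy
        obtain ⟨j₀, hj₀⟩ := hTne y hy
        set Fy : Finset ℝ :=
          (Finset.univ.filter (fun j' => j' ∈ T y)).image (fun j' => La j' d') with hFy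
        have hFyne : Fy.Nonempty :=
          ⟨La j₀ d', Finset.mem_image.2 ⟨j₀, Finset.mem_filter.2 ⟨Finset.mem_univ _, hj₀⟩, rfl⟩⟩
        set m := Fy.max' hFyne with hm
        have hmy : m ≤ y := by
          apply Finset.max'_le
          intro z hz
          obtain ⟨j', hj', rfl⟩ := Finset.mem_image.1 hz
          exact (Finset.mem_filter.1 hj').2.2.2
        have hTym : T y ⊆ T m := by
          intro j' hj'
          refine ⟨hj'.1, hj'.2.1, ?_⟩
          apply Finset.le_max'
          exact Finset.mem_image.2 ⟨j', Finset.mem_filter.2 ⟨Finset.mem_univ _, hj'⟩, rfl⟩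
        have hdm : dep m := spanCols_mono μ hTym hy
        have hmYF : m ∈ YF := by
          obtain ⟨j'', hj'', he⟩ := Finset.mem_image.1 (Finset.max'_mem Fy hFyne)
          have hj''T : j'' ∈ T y := (Finset.mem_filter.1 hj'').2
          rw [hm, ← he]
          exact Finset.mem_image.2
            ⟨j'', Finset.mem_filter.2 ⟨Finset.mem_univ _, hj''T.1, hj''T.2.1⟩, rfl⟩
        exact ⟨m, hmYF, hmy, hdm⟩
      set Ydep : Finset ℝ := YF.filter (fun y => dep y) with hYdep
      have hYdepne : Ydep.Nonempty := by
        obtain ⟨m, hm1, _, hm3⟩ := hmemYF y₀ hy₀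
        exact ⟨m, Finset.mem_filter.2 ⟨hm1, hm3⟩⟩
      set w := Ydep.min' hYdepne with hw
      have hdepw : dep w := (Finset.mem_filter.1 (Finset.min'_mem Ydep hYdepne)).2
      have hwchar : ∀ y, dep y ↔ w ≤ y := by
        intro y
        constructor
        · intro hy
          obtain ⟨m, hm1, hm2, hm3⟩ := hmemYF y hy
          exact le_trans (Finset.min'_le Ydep m (Finset.mem_filter.2 ⟨hm1, hm3⟩)) hm2
        · intro hy
          exact hdepmono hy hdepw
      have hwgt : p d' < w := by
        by_contra hle
        push_neg at hle
        exact h0 (hdepmono hle hdepw)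
      -- the four corners
      set q : Pt 2 := Function.update p d' w with hq
      set rr : Pt 2 := Function.update (Function.update p d s) d' w with hrr
      have hqd : q d = p d := Function.update_of_ne hdd' w p
      have hqd' : q d' = w := Function.update_self d' w p
      have hrrd : rr d = s := by
        rw [hrr]
        simp [Function.update_of_ne hdd']
      have hrrd' : rr d' = w := by
        rw [hrr]
        simp
      refine ⟨p ::ₘ rr ::ₘ 0, Lb j ::ₘ q ::ₘ 0, (p, Lb j) ::ₘ (rr, q) ::ₘ 0, ?_, ?_, ?_, ?_⟩
      · intro x
        rw [countLe_cons, countLe_cons, countLe_cons, countLe_cons, countLe_zero]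
        have hrrle : rr ≤ x ↔ s ≤ x d ∧ w ≤ x d' := by
          rw [le2 _ _ d, hrrd, hrrd']
        have hqle : q ≤ x ↔ p d ≤ x d ∧ w ≤ x d' := by
          rw [le2 _ _ d, hqd, hqd']
        have hLbjle : Lb j ≤ x ↔ s ≤ x d ∧ p d' ≤ x d' := by
          rw [le2 _ _ d, hLbjd, hLbjd']
        by_cases hx : p ≤ x
        · by_cases hxd : s ≤ x d
          · rw [K3 x hx hxd]
            have h1 : p ≤ x := hx
            rw [if_pos h1, if_pos (hLbjle.2 ⟨hxd, hx d'⟩)]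
            by_cases hwx : w ≤ x d'
            · rw [if_pos (hrrle.2 ⟨hxd, hwx⟩), if_pos (hqle.2 ⟨hx d, hwx⟩)]
              push_cast; try ring
            · rw [if_neg (fun h => hwx (hrrle.1 h).2), if_neg (fun h => hwx (hqle.1 h).2)]
              push_cast; try ring
          · have hxd' := not_le.1 hxd
            have h1 := strip x hx hxd'
            rw [h1, if_pos hx, if_neg (fun h => hxd (hrrle.1 h).1),
                if_neg (fun h => hxd (hLbjle.1 h).1)]
            by_cases hwx : w ≤ x d'
            · rw [if_pos (hqle.2 ⟨hx d, hwx⟩), if_pos ((hwchar _).2 hwx)]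
              push_cast; try ring
            · rw [if_neg (fun h => hwx (hqle.1 h).2), if_neg (fun h => hwx ((hwchar _).1 h))]
              push_cast; try ring
        · rw [K2 x hx, if_neg hx, if_neg (fun h => hx (le_trans hpLbj h))]
          have hpq : p ≤ q := by
            rw [le2 _ _ d, hqd, hqd']
            exact ⟨le_refl _, le_of_lt hwgt⟩
          have hprr : p ≤ rr := by
            rw [le2 _ _ d, hrrd, hrrd']
            exact ⟨hps, le_of_lt hwgt⟩
          rw [if_neg (fun h => hx (le_trans hprr h)), if_neg (fun h => hx (le_trans hpq h))]
          push_cast; try ring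
      · rfl
      · rfl
      · rw [matchCost_cons, matchCost_cons, matchCost_zero, add_zero]
        have e1 : l1dist p (Lb j) = s - p d := by
          rw [hLbj, l1dist_update_self]
          rw [abs_sub_comm, abs_of_nonneg (by linarith)]
        have e2 : l1dist rr q = s - p d := by
          rw [l1dist_eq_of_eq_off rr q d, hrrd, hqd,
              abs_of_nonneg (by linarith)]
          intro i hi
          rcases fin2_eq_or i d with rfl | rfl
          · exact absurd rfl hi
          · rw [hrrd', hqd']
        rw [e1, e2]
        linarith
    · -- never dependent: full strip
      push_neg at hW
      refine ⟨p ::ₘ 0, Lb j ::ₘ 0, (p, Lb j) ::ₘ 0, ?_, rfl, rfl, ?_⟩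
      · intro x
        rw [countLe_cons, countLe_cons, countLe_zero]
        have hLbjle : Lb j ≤ x ↔ s ≤ x d ∧ p d' ≤ x d' := by
          rw [le2 _ _ d, hLbjd, hLbjd']
        by_cases hx : p ≤ x
        · by_cases hxd : s ≤ x d
          · rw [K3 x hx hxd, if_pos hx, if_pos (hLbjle.2 ⟨hxd, hx d'⟩)]
            push_cast; try ring
          · have h1 := strip x hx (not_le.1 hxd)
            rw [if_neg (hW (x d'))] at h1
            rw [h1, if_pos hx, if_neg (fun h => hxd (hLbjle.1 h).1)]
            push_cast; try ring
        · rw [K2 x hx, if_neg hx, if_neg (fun h => hx (le_trans hpLbj h))]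
          push_cast; try ring
      · rw [matchCost_cons, matchCost_zero, add_zero]
        have e1 : l1dist p (Lb j) = s - p d := by
          rw [hLbj, l1dist_update_self, abs_sub_comm, abs_of_nonneg (by linarith)]
        rw [e1]
        linarith

/-- Moving one column label up in one coordinate, general case. -/
lemma col_move_incr (μ : Matrix (Fin r) (Fin c) k) :
    ∀ (N : ℕ) (La : Fin c → Pt 2) (j : Fin c) (d : Fin 2) (s : ℝ), La j d ≤ s →
    (Finset.univ.filter
      (fun j' => j' ≠ j ∧ La j d < La j' d ∧ La j' d < s)).card ≤ N →
    ColDecompC μ La (Function.update La j (Function.update (La j) d s))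
      (2 * (s - La j d)) := by
  intro N
  induction N with
  | zero =>
    intro La j d s hps hcard
    apply col_move_base μ La j d s hps
    intro j' hj' hcontra
    have : j' ∈ Finset.univ.filter
        (fun j' => j' ≠ j ∧ La j d < La j' d ∧ La j' d < s) :=
      Finset.mem_filter.2 ⟨Finset.mem_univ _, hj', hcontra⟩
    have h2 := Finset.card_pos.2 ⟨j', this⟩
    omega
  | succ N ih =>
    intro La j d s hps hcard
    by_cases hex : ∃ j', j' ≠ j ∧ La j d < La j' d ∧ La j' d < s
    · obtain ⟨j₀, hj₀ne, hj₀1, hj₀2⟩ := hex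
      set t := La j₀ d with ht
      set Lmid := Function.update La j (Function.update (La j) d t) with hLmid
      have hj₀mem : j₀ ∈ Finset.univ.filter
          (fun j' => j' ≠ j ∧ La j d < La j' d ∧ La j' d < s) :=
        Finset.mem_filter.2 ⟨Finset.mem_univ _, hj₀ne, hj₀1, hj₀2⟩
      have hmid1 : ColDecompC μ La Lmid (2 * (t - La j d)) := by
        apply ih La j d t (le_of_lt hj₀1)
        have hsub : Finset.univ.filter
            (fun j' => j' ≠ j ∧ La j d < La j' d ∧ La j' d < t)
            ⊆ (Finset.univ.filter
            (fun j' => j' ≠ j ∧ La j d < La j' d ∧ La j' d < s)).erase j₀ := by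
          intro j' hj'
          obtain ⟨_, h1, h2, h3⟩ := Finset.mem_filter.1 hj'
          apply Finset.mem_erase.2
          refine ⟨?_, Finset.mem_filter.2 ⟨Finset.mem_univ _, h1, h2, lt_trans h3 hj₀2⟩⟩
          intro hjj
          subst hjj
          exact absurd h3 (lt_irrefl t)
        have := Finset.card_le_card hsub
        rw [Finset.card_erase_of_mem hj₀mem] at this
        omega
      have hmidj : Lmid j = Function.update (La j) d t := Function.update_self j _ La
      have hmidj' : ∀ j', j' ≠ j → Lmid j' = La j' :=
        fun j' hj' => Function.update_of_ne hj' _ La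
      have hmidjd : Lmid j d = t := by rw [hmidj]; exact Function.update_self d t (La j)
      have hmid2 : ColDecompC μ Lmid
          (Function.update Lmid j (Function.update (Lmid j) d s)) (2 * (s - t)) := by
        have := ih Lmid j d s (by rw [hmidjd]; exact le_of_lt hj₀2) ?_
        · rw [hmidjd] at this; exact this
        · have hsub : Finset.univ.filter
              (fun j' => j' ≠ j ∧ Lmid j d < Lmid j' d ∧ Lmid j' d < s)
              ⊆ (Finset.univ.filter
              (fun j' => j' ≠ j ∧ La j d < La j' d ∧ La j' d < s)).erase j₀ := by
            intro j' hj'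
            obtain ⟨_, h1, h2, h3⟩ := Finset.mem_filter.1 hj'
            rw [hmidjd] at h2
            rw [hmidj' j' h1] at h2 h3
            apply Finset.mem_erase.2
            refine ⟨?_, Finset.mem_filter.2
              ⟨Finset.mem_univ _, h1, lt_trans hj₀1 h2, h3⟩⟩
            intro hjj
            subst hjj
            exact absurd h2 (lt_irrefl t)
          have := Finset.card_le_card hsub
          rw [Finset.card_erase_of_mem hj₀mem] at this
          omega
      have hLbeq : Function.update Lmid j (Function.update (Lmid j) d s)
          = Function.update La j (Function.update (La j) d s) := by
        rw [hLmid]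
        simp [Function.update_idem, Function.update_self]
      rw [hLbeq] at hmid2
      have := colDecompC_trans hmid1 hmid2
      exact colDecompC_mono this (by linarith)
    · apply col_move_base μ La j d s hps
      intro j' hj' hcontra
      exact hex ⟨j', hj', hcontra⟩

/-- Moving one column label in one coordinate, either direction. -/
lemma col_move_any (μ : Matrix (Fin r) (Fin c) k) (La : Fin c → Pt 2) (j : Fin c)
    (d : Fin 2) (v : ℝ) :
    ColDecompC μ La (Function.update La j (Function.update (La j) d v))
      (2 * |La j d - v|) := by
  rcases le_total (La j d) v with h | h
  · have := col_move_incr μ (Finset.univ.filter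
      (fun j' => j' ≠ j ∧ La j d < La j' d ∧ La j' d < v)).card La j d v h (le_refl _)
    apply colDecompC_mono this
    rw [abs_sub_comm, abs_of_nonneg (by linarith)]
  · set Lb := Function.update La j (Function.update (La j) d v) with hLb
    have hLbj : Lb j = Function.update (La j) d v := Function.update_self j _ La
    have hLbjd : Lb j d = v := by rw [hLbj]; exact Function.update_self d v (La j)
    have hback : Function.update Lb j (Function.update (Lb j) d (La j d)) = La := by
      rw [hLb]
      simp [Function.update_idem, Function.update_self, Function.update_eq_self]
    have h1 := col_move_incr μ (Finset.univ.filter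
      (fun j' => j' ≠ j ∧ Lb j d < Lb j' d ∧ Lb j' d < La j d)).card Lb j d (La j d)
      (by rw [hLbjd]; exact h) (le_refl _)
    rw [hback, hLbjd] at h1
    have h2 := colDecompC_symm h1
    apply colDecompC_mono h2
    rw [abs_of_nonneg (by linarith : (0:ℝ) ≤ La j d - v)]

/-- Chain of single moves: general column relabeling. -/
lemma col_chain (μ : Matrix (Fin r) (Fin c) k) :
    ∀ (N : ℕ) (La Lb : Fin c → Pt 2),
    (Finset.univ.filter
      (fun jd : Fin c × Fin 2 => La jd.1 jd.2 ≠ Lb jd.1 jd.2)).card ≤ N →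
    ColDecompC μ La Lb (2 * ∑ j', l1dist (La j') (Lb j')) := by
  intro N
  induction N with
  | zero =>
    intro La Lb hcard
    have hLaLb : La = Lb := by
      funext j' i
      by_contra hne
      have : (j', i) ∈ Finset.univ.filter
          (fun jd : Fin c × Fin 2 => La jd.1 jd.2 ≠ Lb jd.1 jd.2) :=
        Finset.mem_filter.2 ⟨Finset.mem_univ _, hne⟩
      have h2 := Finset.card_pos.2 ⟨(j', i), this⟩
      omega
    subst hLaLb
    apply colDecompC_mono (colDecompC_refl μ La)
    have : (0:ℝ) ≤ ∑ j', l1dist (La j') (La j') :=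
      Finset.sum_nonneg fun j' _ => l1dist_nonneg _ _
    linarith
  | succ N ih =>
    intro La Lb hcard
    by_cases hex : ∃ jd : Fin c × Fin 2, La jd.1 jd.2 ≠ Lb jd.1 jd.2
    · obtain ⟨⟨j, d⟩, hjd⟩ := hex
      have hjdmem : (j, d) ∈ Finset.univ.filter
          (fun jd : Fin c × Fin 2 => La jd.1 jd.2 ≠ Lb jd.1 jd.2) :=
        Finset.mem_filter.2 ⟨Finset.mem_univ _, hjd⟩
      set Lmid := Function.update La j (Function.update (La j) d (Lb j d)) with hLmid
      have hmidj : Lmid j = Function.update (La j) d (Lb j d) := Function.update_self j _ La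
      have hmidj' : ∀ j', j' ≠ j → Lmid j' = La j' :=
        fun j' hj' => Function.update_of_ne hj' _ La
      have h1 : ColDecompC μ La Lmid (2 * |La j d - Lb j d|) := col_move_any μ La j d (Lb j d)
      have h2 : ColDecompC μ Lmid Lb (2 * ∑ j', l1dist (Lmid j') (Lb j')) := by
        apply ih
        have hsub : Finset.univ.filter
            (fun jd : Fin c × Fin 2 => Lmid jd.1 jd.2 ≠ Lb jd.1 jd.2)
            ⊆ (Finset.univ.filter
            (fun jd : Fin c × Fin 2 => La jd.1 jd.2 ≠ Lb jd.1 jd.2)).erase (j, d) := by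
          rintro ⟨j₁, d₁⟩ hj₁
          have hne := (Finset.mem_filter.1 hj₁).2
          apply Finset.mem_erase.2
          by_cases hj : j₁ = j
          · by_cases hd : d₁ = d
            · exfalso
              apply hne
              rw [hj, hd, hmidj]
              exact Function.update_self d (Lb j d) (La j)
            · constructor
              · intro hcontra
                exact hd (congrArg Prod.snd hcontra)
              · apply Finset.mem_filter.2
                refine ⟨Finset.mem_univ _, ?_⟩
                rw [hj] at hne ⊢
                rw [hmidj] at hne
                simp only [Function.update_of_ne hd] at hne
                exact hne
          · constructor
            · intro hcontra
              exact hj (congrArg Prod.fst hcontra)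
            · apply Finset.mem_filter.2
              refine ⟨Finset.mem_univ _, ?_⟩
              rwa [hmidj' j₁ hj] at hne
        have := Finset.card_le_card hsub
        rw [Finset.card_erase_of_mem hjdmem] at this
        omega
      have hcosteq : ∑ j', l1dist (Lmid j') (Lb j') + |La j d - Lb j d|
          = ∑ j', l1dist (La j') (Lb j') := by
        rw [← Finset.sum_erase_add _ _ (Finset.mem_univ j),
            ← Finset.sum_erase_add _ (fun j' => l1dist (La j') (Lb j')) (Finset.mem_univ j)]
        have he : ∀ j'' ∈ Finset.univ.erase j,
            l1dist (Lmid j'') (Lb j'') = l1dist (La j'') (Lb j'') := by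
          intro j'' hj''
          rw [hmidj' j'' (Finset.ne_of_mem_erase hj'')]
        rw [Finset.sum_congr rfl he, hmidj, add_assoc, l1dist_update_add]
      have := colDecompC_trans h1 h2
      apply colDecompC_mono this
      linarith
    · push_neg at hex
      have hLaLb : La = Lb := by
        funext j' i
        exact hex (j', i)
      subst hLaLb
      apply colDecompC_mono (colDecompC_refl μ La)
      have : (0:ℝ) ≤ ∑ j', l1dist (La j') (La j') :=
        Finset.sum_nonneg fun j' _ => l1dist_nonneg _ _
      linarith

end MoveAux

/-- **Theorem 1.5** (1-Wasserstein stability of minimal Hilbert decompositions,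
presentation form). If `M` and `N` admit presentation matrices with the same underlying
matrix `μ`, then for minimal Hilbert decompositions `(P, Q)` of `Hil(M)` and `(P', Q')` of
`Hil(N)` one has
`d_{W¹}(ℬ(P) ∪ ℬ(Q'), ℬ(P') ∪ ℬ(Q)) ≤ 2 ∑_i ‖L(P_M)(i) − L(P_N)(i)‖₁`. -/
theorem hilbert_decomposition_wasserstein_stability
    {k : Type} [Field k]
    (M N : PersMod k 2) (hM : FinitelyPresentable M) (hN : FinitelyPresentable N)
    (r c : ℕ) (μ : Matrix (Fin r) (Fin c) k)
    (LrM : Fin r → Pt 2) (LcM : Fin c → Pt 2)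
    (LrN : Fin r → Pt 2) (LcN : Fin c → Pt 2)
    (hPM : Presents μ LrM LcM M) (hPN : Presents μ LrN LcN N)
    (P Q P' Q' : PersMod k 2) (BP BQ BP' BQ' : Multiset (Pt 2))
    (hMd : IsMinHilbDecomp (fun x => (Hil M x : ℤ)) P Q BP BQ)
    (hNd : IsMinHilbDecomp (fun x => (Hil N x : ℤ)) P' Q' BP' BQ') :
    wassDist (BP + BQ') (BP' + BQ)
      ≤ ENNReal.ofReal
          (2 * ((∑ i, l1dist (LrM i) (LrN i)) + ∑ j, l1dist (LcM j) (LcN j))) := by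
  set rowM : Multiset (Pt 2) := Multiset.map LrM Finset.univ.val with hrowM
  set rowN : Multiset (Pt 2) := Multiset.map LrN Finset.univ.val with hrowN
  have hHilM : ∀ x, (Hil M x : ℤ) = (countLe rowM x : ℤ) - (rkS μ (Scol LcM x) : ℤ) := by
    intro x
    rw [hil_presents hPM x, card_subtype_eq_countLe]
  have hHilN : ∀ x, (Hil N x : ℤ) = (countLe rowN x : ℤ) - (rkS μ (Scol LcN x) : ℤ) := by
    intro x
    rw [hil_presents hPN x, card_subtype_eq_countLe]
  obtain ⟨hPfree, hQfree, hMdeq, _⟩ := hMd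
  obtain ⟨hP'free, hQ'free, hNdeq, _⟩ := hNd
  obtain ⟨Xp, Xm, mc, heq, hmf, hms, hmcost⟩ :=
    col_chain μ (Finset.univ.filter
      (fun jd : Fin c × Fin 2 => LcN jd.1 jd.2 ≠ LcM jd.1 jd.2)).card LcN LcM (le_refl _)
  -- the key multiset identity
  have hkey : (BP + BQ') + (rowN + Xm) = (BP' + BQ) + (rowM + Xp) := by
    apply countLe_inj
    intro x
    have e1 : (Hil M x : ℤ) = (countLe BP x : ℤ) - (countLe BQ x : ℤ) := by
      have := hMdeq x
      rw [hil_free hPfree x, hil_free hQfree x] at this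
      exact this
    have e2 : (Hil N x : ℤ) = (countLe BP' x : ℤ) - (countLe BQ' x : ℤ) := by
      have := hNdeq x
      rw [hil_free hP'free x, hil_free hQ'free x] at this
      exact this
    have h1 := hHilM x
    have h2 := hHilN x
    have h3 := heq x
    have hZ : ((countLe ((BP + BQ') + (rowN + Xm)) x : ℤ))
        = ((countLe ((BP' + BQ) + (rowM + Xp)) x : ℤ)) := by
      rw [countLe_add, countLe_add, countLe_add, countLe_add, countLe_add, countLe_add]
      push_cast
      linarith
    exact_mod_cast hZ
  -- assemble the total matching
  set mtot : Multiset (Pt 2 × Pt 2) :=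
    (BP' + BQ).map (fun a => (a, a))
      + Finset.univ.val.map (fun i => (LrM i, LrN i)) + mc with hmtot
  have hfst : mtot.map Prod.fst = (BP + BQ') + (rowN + Xm) := by
    rw [hmtot, Multiset.map_add, Multiset.map_add, Multiset.map_map, Multiset.map_map, hmf]
    have ediag : Multiset.map (Prod.fst ∘ fun a : Pt 2 => (a, a)) (BP' + BQ) = BP' + BQ := by
      have : (Prod.fst ∘ fun a : Pt 2 => (a, a)) = id := rfl
      rw [this, Multiset.map_id]
    have erow : Multiset.map (Prod.fst ∘ fun i => (LrM i, LrN i)) Finset.univ.val = rowM := by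
      rfl
    rw [ediag, erow, add_assoc, ← hkey]
  have hsnd : mtot.map Prod.snd = (BP' + BQ) + (rowN + Xm) := by
    rw [hmtot, Multiset.map_add, Multiset.map_add, Multiset.map_map, Multiset.map_map, hms]
    have ediag : Multiset.map (Prod.snd ∘ fun a : Pt 2 => (a, a)) (BP' + BQ) = BP' + BQ := by
      have : (Prod.snd ∘ fun a : Pt 2 => (a, a)) = id := rfl
      rw [this, Multiset.map_id]
    have erow : Multiset.map (Prod.snd ∘ fun i => (LrM i, LrN i)) Finset.univ.val = rowN := by
      rfl
    rw [ediag, erow, add_assoc]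
  obtain ⟨m', hm'f, hm's, hm'cost⟩ :=
    cancel_many (rowN + Xm) (BP + BQ') (BP' + BQ) mtot hfst hsnd
  -- cost of the total matching
  have hrowcost : matchCost (Finset.univ.val.map (fun i => (LrM i, LrN i)))
      = ∑ i, l1dist (LrM i) (LrN i) := by
    unfold matchCost
    rw [Multiset.map_map]
    rfl
  have hcolsum : (∑ j', l1dist (LcN j') (LcM j')) = ∑ j, l1dist (LcM j) (LcN j) :=
    Finset.sum_congr rfl fun j' _ => l1dist_comm _ _
  have hrowsum_nonneg : (0:ℝ) ≤ ∑ i, l1dist (LrM i) (LrN i) :=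
    Finset.sum_nonneg fun i _ => l1dist_nonneg _ _
  have hcost : matchCost m'
      ≤ 2 * ((∑ i, l1dist (LrM i) (LrN i)) + ∑ j, l1dist (LcM j) (LcN j)) := by
    have h1 : matchCost mtot
        = matchCost ((BP' + BQ).map (fun a => (a, a)))
          + matchCost (Finset.univ.val.map (fun i => (LrM i, LrN i))) + matchCost mc := by
      rw [hmtot, matchCost_add, matchCost_add]
    rw [matchCost_diag, hrowcost] at h1
    have := hmcost
    rw [hcolsum] at this
    linarith
  -- conclude
  have hmem : ENNReal.ofReal (matchCost m') ∈
      { e : ℝ≥0∞ | ∃ m : Multiset (Pt 2 × Pt 2),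
        m.map Prod.fst = BP + BQ' ∧ m.map Prod.snd = BP' + BQ
          ∧ e = ENNReal.ofReal (matchCost m) } :=
    ⟨m', hm'f, hm's, rfl⟩
  calc wassDist (BP + BQ') (BP' + BQ) ≤ ENNReal.ofReal (matchCost m') := sInf_le hmem
    _ ≤ ENNReal.ofReal
        (2 * ((∑ i, l1dist (LrM i) (LrN i)) + ∑ j, l1dist (LcM j) (LcN j))) :=
      ENNReal.ofReal_le_ofReal hcost

end
end
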